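/- Let p be an odd prime and t an integer with t ≢ 0 (mod p) and t ≢ 1 (mod p). Then γ_p(t mod p) = ((t − 1)·q_p(t − 1) − t·q_p(t)) mod p in 𝔽_p. -/

import Mathlib

def fermatQuotient (p : ℕ) (k : ℤ) : ℕ :=
  (((k ^ (p - 1) - 1) / p) % p).toNat

noncomputable def kappa (p : ℕ) : ℕ :=
  sInf {n : ℕ | 0 < n ∧ ¬ p ∣ n ∧ fermatQuotient p n ≠ 0}

def mirimanoff (p : ℕ) (t : ZMod p) : ZMod p :=
  ∑ j ∈ Finset.Icc 1 (p - 1), (j : ZMod p)⁻¹ * t ^ j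

private lemma choose_sub_one_cast (p : ℕ) (hp : p.Prime) :
    ∀ k, k ≤ p - 1 → ((Nat.choose (p - 1) k : ZMod p)) = (-1) ^ k := by
  intro k
  induction k with
  | zero => simp
  | succ n ih =>
    intro hn
    have hn' : n ≤ p - 1 := by omega
    have hps : p - 1 + 1 = p := Nat.succ_pred_eq_of_pos hp.pos
    have hch : Nat.choose p (n + 1) = Nat.choose (p - 1) n + Nat.choose (p - 1) (n + 1) := by
      conv_lhs => rw [← hps]
      exact Nat.choose_succ_succ _ _
    have hdvd : p ∣ Nat.choose p (n + 1) :=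
      hp.dvd_choose_self (by omega) (by omega)
    have h0 : ((Nat.choose p (n + 1) : ZMod p)) = 0 := by
      exact_mod_cast (ZMod.natCast_eq_zero_iff _ _).mpr hdvd
    have hthis := congrArg (Nat.cast : ℕ → ZMod p) hch
    push_cast at hthis
    rw [h0, ih hn'] at hthis
    have h2 : ((Nat.choose (p - 1) (n + 1) : ZMod p)) = -(-1) ^ n := by linear_combination -hthis
    rw [h2, pow_succ]
    ring

private lemma choose_div_cast (p : ℕ) (hp : p.Prime) (j : ℕ) (h1 : 1 ≤ j) (h2 : j ≤ p - 1) :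
    ((Nat.choose p j / p : ℕ) : ZMod p) = (-1) ^ (j - 1) * (j : ZMod p)⁻¹ := by
  haveI : Fact p.Prime := ⟨hp⟩
  have hjp : j < p := by omega
  have hdvd : p ∣ Nat.choose p j := hp.dvd_choose_self (by omega) hjp
  have hc : p * (Nat.choose p j / p) = Nat.choose p j := Nat.mul_div_cancel' hdvd
  have hps : p - 1 + 1 = p := Nat.succ_pred_eq_of_pos hp.pos
  have hid : p * Nat.choose (p - 1) (j - 1) = Nat.choose p j * j := by
    have := Nat.add_one_mul_choose_eq (p - 1) (j - 1)
    rw [hps, Nat.sub_add_cancel h1] at this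
    exact this
  have hkey : Nat.choose (p - 1) (j - 1) = (Nat.choose p j / p) * j := by
    apply Nat.eq_of_mul_eq_mul_left hp.pos
    calc p * Nat.choose (p - 1) (j - 1) = Nat.choose p j * j := hid
    _ = (p * (Nat.choose p j / p)) * j := by rw [hc]
    _ = p * (Nat.choose p j / p * j) := by ring
  have hj0 : (j : ZMod p) ≠ 0 := by
    rw [Ne, ZMod.natCast_eq_zero_iff]
    intro h
    exact absurd (Nat.le_of_dvd (by omega) h) (by omega)
  have hthis := congrArg (Nat.cast : ℕ → ZMod p) hkey
  push_cast at hthis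
  rw [choose_sub_one_cast p hp (j - 1) (by omega)] at hthis
  rw [hthis, mul_assoc, mul_inv_cancel₀ hj0, mul_one]

private lemma fq_cast (p : ℕ) (hp : p.Prime) (x : ℤ) :
    ((fermatQuotient p x : ℕ) : ZMod p) = (((x ^ (p - 1) - 1) / p : ℤ) : ZMod p) := by
  have hppos : (0 : ℤ) < p := by exact_mod_cast hp.pos
  have h : ((fermatQuotient p x : ℤ) : ZMod p) = (((x ^ (p - 1) - 1) / p : ℤ) : ZMod p) := by
    unfold fermatQuotient
    rw [Int.toNat_of_nonneg (Int.emod_nonneg _ hppos.ne')]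
    rw [ZMod.intCast_eq_intCast_iff]
    exact Int.emod_emod_of_dvd _ dvd_rfl
  rw [← h]
  push_cast
  rfl

theorem mirimanoff_eq_fermatQuotient (p : ℕ) (hp : p.Prime) (hodd : Odd p)
    (t : ℤ) (ht0 : (t : ZMod p) ≠ 0) (ht1 : (t : ZMod p) ≠ 1) :
    mirimanoff p (t : ZMod p) =
      (((t - 1) * fermatQuotient p (t - 1) - t * fermatQuotient p t : ℤ) : ZMod p) := by
  haveI : Fact p.Prime := ⟨hp⟩
  have hppos : 0 < p := hp.pos
  have hpz : (p : ℤ) ≠ 0 := by exact_mod_cast hppos.ne'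
  have hps : p - 1 + 1 = p := Nat.succ_pred_eq_of_pos hppos
  set Q : ℤ → ℤ := fun x => (x ^ (p - 1) - 1) / p with hQdef
  have hx1 : ((t - 1 : ℤ) : ZMod p) ≠ 0 := by
    push_cast
    rw [sub_ne_zero]
    exact ht1
  have hdvd : ∀ x : ℤ, (x : ZMod p) ≠ 0 → (p : ℤ) ∣ x ^ (p - 1) - 1 := by
    intro x hx
    rw [← ZMod.intCast_zmod_eq_zero_iff_dvd]
    push_cast
    rw [ZMod.pow_card_sub_one_eq_one hx]
    ring
  have hpow : ∀ x : ℤ, (x : ZMod p) ≠ 0 → x ^ p = x + p * (x * Q x) := by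
    intro x hx
    have h := Int.ediv_mul_cancel (hdvd x hx)
    calc x ^ p = x ^ (p - 1) * x := by rw [← pow_succ, hps]
    _ = x + x * (x ^ (p - 1) - 1) := by ring
    _ = x + x * ((x ^ (p - 1) - 1) / (p : ℤ) * p) := by rw [h]
    _ = x + p * (x * Q x) := by rw [hQdef]; ring
  set c : ℕ → ℕ := fun k => Nat.choose p k / p with hcdef
  set B : ℤ := ∑ k ∈ Finset.Icc 1 (p - 1), (c k : ℤ) * (-1) ^ (p - k) * t ^ k with hBdef
  have hIcc : Finset.Icc 1 (p - 1) = Finset.Ico 1 p := by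
    rw [← Finset.Ico_add_one_right_eq_Icc, hps]
  have hbin : (t - 1) ^ p - t ^ p + 1 = p * B := by
    have h1 : (t - 1) ^ p
        = ∑ k ∈ Finset.range (p + 1), t ^ k * (-1 : ℤ) ^ (p - k) * (Nat.choose p k) := by
      calc (t - 1) ^ p = (t + (-1)) ^ p := by ring
      _ = _ := add_pow t (-1 : ℤ) p
    have h3 : ∀ k ∈ Finset.Icc 1 (p - 1),
        t ^ k * (-1 : ℤ) ^ (p - k) * (Nat.choose p k)
          = (p : ℤ) * ((c k : ℤ) * (-1) ^ (p - k) * t ^ k) := by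
      intro k hk
      simp only [Finset.mem_Icc] at hk
      have hcc : p * c k = Nat.choose p k :=
        Nat.mul_div_cancel' (hp.dvd_choose_self (by omega) (by omega))
      have hcc' : (Nat.choose p k : ℤ) = (p : ℤ) * (c k : ℤ) := by exact_mod_cast hcc.symm
      rw [hcc']
      ring
    rw [h1, Finset.sum_range_succ, Finset.range_eq_Ico,
      Finset.sum_eq_sum_Ico_succ_bot hppos, ← hIcc, Finset.sum_congr rfl h3, ← Finset.mul_sum,
      ← hBdef]
    simp only [pow_zero, Nat.choose_zero_right, Nat.cast_one, mul_one, one_mul, Nat.sub_zero,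
      Nat.sub_self, Nat.choose_self, hodd.neg_one_pow]
    ring
  have hB2 : (t - 1) ^ p - t ^ p + 1 = p * ((t - 1) * Q (t - 1) - t * Q t) := by
    rw [hpow (t - 1) hx1, hpow t ht0]
    ring
  have hBeq : B = (t - 1) * Q (t - 1) - t * Q t := by
    apply mul_left_cancel₀ hpz
    rw [← hbin, hB2]
  have hBcast : ((B : ℤ) : ZMod p) = mirimanoff p (t : ZMod p) := by
    rw [hBdef]
    push_cast
    unfold mirimanoff
    apply Finset.sum_congr rfl
    intro j hj
    simp only [Finset.mem_Icc] at hj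
    rw [hcdef]
    simp only
    rw [choose_div_cast p hp j hj.1 hj.2]
    have hsign : ((-1 : ZMod p)) ^ (j - 1) * (-1) ^ (p - j) = 1 := by
      rw [← pow_add]
      have he : j - 1 + (p - j) = p - 1 := by omega
      rw [he]
      exact Even.neg_one_pow (Nat.Odd.sub_odd hodd odd_one)
    calc (-1 : ZMod p) ^ (j - 1) * (j : ZMod p)⁻¹ * (-1) ^ (p - j) * (t : ZMod p) ^ j
        = ((-1 : ZMod p) ^ (j - 1) * (-1) ^ (p - j)) * ((j : ZMod p)⁻¹ * (t : ZMod p) ^ j) := by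
          ring
      _ = (j : ZMod p)⁻¹ * (t : ZMod p) ^ j := by rw [hsign, one_mul]
  rw [← hBcast, hBeq]
  have hA := fq_cast p hp (t - 1)
  have hB' := fq_cast p hp t
  simp only [hQdef]
  push_cast at hA hB' ⊢
  rw [hA, hB']
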